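/- Let 0 < τ < 1/2 and k a nonnegative integer. Then the Riemann sums Sₖ⁽ⁿ⁾ = (2π/n)·∑_{j=0}^{n-1} e^{-ijk·2π/n}/(1 - 2τ·cos(2πj/n)) converge, as n → ∞, to 2π·αᵏ/√(1 - 4τ²) with α = (1 - √(1 - 4τ²))/(2τ). -/

import Mathlib

open Complex Finset Filter

lemma exp_sum_roots (n : ℕ) (hn : 0 < n) (t : ℤ) :
    ∑ j ∈ Finset.range n, Complex.exp (2 * Real.pi * I * ((j : ℤ) * t) / n) =
      if (n : ℤ) ∣ t then (n : ℂ) else 0 := by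
  have hn0 : (n : ℂ) ≠ 0 := Nat.cast_ne_zero.mpr hn.ne'
  set ζ : ℂ := Complex.exp (2 * Real.pi * I * t / n) with hζdef
  have hpow : ∀ j : ℕ, Complex.exp (2 * Real.pi * I * ((j : ℤ) * t) / n) = ζ ^ j := by
    intro j
    rw [hζdef, ← Complex.exp_nat_mul]
    congr 1
    push_cast
    ring
  simp_rw [hpow]
  by_cases hdvd : (n : ℤ) ∣ t
  · obtain ⟨c, rfl⟩ := hdvd
    have hζ1 : ζ = 1 := by
      rw [hζdef, Complex.exp_eq_one_iff]
      refine ⟨c, ?_⟩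
      field_simp
      push_cast
      ring
    simp [hζ1, if_pos (⟨c, rfl⟩ : (n:ℤ) ∣ (n:ℤ)*c)]
  · have hζ1 : ζ ≠ 1 := by
      intro h
      rw [hζdef, Complex.exp_eq_one_iff] at h
      obtain ⟨m, hm⟩ := h
      apply hdvd
      refine ⟨m, ?_⟩
      rw [mul_comm]
      have hπ : (Real.pi : ℂ) ≠ 0 := Complex.ofReal_ne_zero.mpr Real.pi_ne_zero
      field_simp at hm
      have : (t : ℂ) = ((m * n : ℤ) : ℂ) := by
        push_cast
        have h2 : (2:ℂ) * Real.pi * I * t = 2 * Real.pi * I * (m * n) := by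
          linear_combination (2 * (Real.pi:ℂ) * I) * hm
        have hI : (2:ℂ) * Real.pi * I ≠ 0 := by
          simp [Complex.I_ne_zero, hπ]
        exact mul_left_cancel₀ hI h2
      exact_mod_cast this
    have hζn : ζ ^ n = 1 := by
      rw [hζdef, ← Complex.exp_nat_mul, Complex.exp_eq_one_iff]
      refine ⟨t, ?_⟩
      field_simp
    rw [geom_sum_eq hζ1, hζn]
    simp [hdvd]

set_option maxHeartbeats 2000000 in
theorem riemann_sum_tendsto (τ : ℝ) (hτ0 : 0 < τ) (hτ : τ < 1 / 2) (k : ℕ) :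
    Filter.Tendsto
      (fun n : ℕ =>
        ((2 * Real.pi / n : ℝ) : ℂ) * ∑ j ∈ Finset.range n,
          Complex.exp (-Complex.I * j * k * (2 * Real.pi / n)) /
            ((1 - 2 * τ * Real.cos (2 * Real.pi * j / n) : ℝ) : ℂ))
      Filter.atTop
      (nhds ((2 * Real.pi * ((1 - Real.sqrt (1 - 4 * τ ^ 2)) / (2 * τ)) ^ k /
        Real.sqrt (1 - 4 * τ ^ 2) : ℝ) : ℂ)) := by
  have h4 : (0:ℝ) < 1 - 4 * τ ^ 2 := by nlinarith
  set s : ℝ := Real.sqrt (1 - 4 * τ ^ 2) with hsdef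
  have hs2 : s ^ 2 = 1 - 4 * τ ^ 2 := Real.sq_sqrt h4.le
  have hs0 : 0 < s := Real.sqrt_pos.mpr h4
  have hs1 : s < 1 := by nlinarith
  set a : ℝ := (1 - s) / (2 * τ) with hadef
  have ha0 : 0 < a := div_pos (by linarith) (by linarith)
  have ha1 : a < 1 := by
    rw [hadef, div_lt_one (by positivity)]
    nlinarith [mul_pos hs0 (show (0:ℝ) < 1 - 2*τ + s by nlinarith)]
  have hquad : τ * (1 + a ^ 2) = a := by
    rw [hadef]
    field_simp
    nlinarith [hs2]
  have hsa : s * a = τ * (1 - a ^ 2) := by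
    have h2ta : 2 * τ * a = 1 - s := by rw [hadef]; field_simp
    nlinarith [hquad, h2ta]
  set A : ℂ := (a : ℂ) with hAdef
  set T : ℂ := (τ : ℂ) with hTdef
  set Sc : ℂ := (s : ℂ) with hScdef
  have hA0 : A ≠ 0 := by
    rw [hAdef]; exact_mod_cast ha0.ne'
  have hSc0 : Sc ≠ 0 := by
    rw [hScdef]; exact_mod_cast hs0.ne'
  have hAnorm : ‖A‖ = a := by
    rw [hAdef, Complex.norm_real, Real.norm_eq_abs, abs_of_pos ha0]
  have hA1 : ‖A‖ < 1 := by rw [hAnorm]; exact ha1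
  have hqC : T * (1 + A ^ 2) = A := by
    rw [hAdef, hTdef]; exact_mod_cast hquad
  have hsaC : Sc * A = T * (1 - A ^ 2) := by
    rw [hAdef, hTdef, hScdef]; exact_mod_cast hsa
  have hAn : Tendsto (fun n : ℕ => A ^ n) atTop (nhds 0) :=
    tendsto_pow_atTop_nhds_zero_of_norm_lt_one hA1
  have hAnorm_pow : ∀ n : ℕ, 0 < n → ‖A ^ n‖ < 1 := by
    intro n hn
    rw [norm_pow, hAnorm]
    exact pow_lt_one₀ ha0.le ha1 hn.ne'
  have hAn1 : ∀ n : ℕ, 0 < n → 1 - A ^ n ≠ 0 := by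
    intro n hn
    intro h
    have h1 : A ^ n = 1 := by linear_combination -h
    have := hAnorm_pow n hn
    rw [h1, norm_one] at this
    exact lt_irrefl _ this
  -- the closed form
  set F : ℕ → ℂ := fun n =>
    if k = 0 then 2 * Real.pi * (1 + A ^ n) / (Sc * (1 - A ^ n))
    else 2 * Real.pi * (A ^ k + A ^ (n - k)) / (Sc * (1 - A ^ n)) with hFdef
  have hFlim : Tendsto F atTop
      (nhds ((2 * Real.pi * a ^ k / s : ℝ) : ℂ)) := by
    have hden : Tendsto (fun n : ℕ => Sc * (1 - A ^ n)) atTop (nhds (Sc * (1 - 0))) :=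
      (tendsto_const_nhds.sub hAn).const_mul Sc
    have hdne : Sc * ((1:ℂ) - 0) ≠ 0 := by
      simpa using hSc0
    by_cases hk : k = 0
    · have hnum : Tendsto (fun n : ℕ => 2 * (Real.pi:ℂ) * (1 + A ^ n)) atTop
          (nhds (2 * (Real.pi:ℂ) * (1 + 0))) :=
        (tendsto_const_nhds.add hAn).const_mul _
      have := hnum.div hden hdne
      rw [hFdef]
      simp only [hk, if_pos]
      convert this using 2
      · rfl
      rw [hScdef]
      push_cast
      ring
    · have hnk : Tendsto (fun n : ℕ => A ^ (n - k)) atTop (nhds 0) :=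
        hAn.comp (tendsto_sub_atTop_nat k)
      have hnum : Tendsto (fun n : ℕ => 2 * (Real.pi:ℂ) * (A ^ k + A ^ (n - k))) atTop
          (nhds (2 * (Real.pi:ℂ) * (A ^ k + 0))) :=
        (tendsto_const_nhds.add hnk).const_mul _
      have := hnum.div hden hdne
      rw [hFdef]
      simp only [hk, if_neg, if_false]
      convert this using 2
      · rfl
      rw [hScdef, hAdef]
      push_cast
      ring
  refine hFlim.congr' ?_
  rw [Filter.EventuallyEq, eventually_atTop]
  refine ⟨k + 1, fun n hn => ?_⟩
  have hkn : k < n := hn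
  have hn0 : 0 < n := Nat.lt_of_lt_of_le (Nat.zero_lt_succ k) hn |>.trans_le (le_refl n)
  have hnC : (n : ℂ) ≠ 0 := Nat.cast_ne_zero.mpr hn0.ne'
  have hc : 1 - A ^ n ≠ 0 := hAn1 n hn0
  have hScc : Sc * (1 - A ^ n) ≠ 0 := mul_ne_zero hSc0 hc
  set e : ℤ → ℂ := fun t => Complex.exp (2 * Real.pi * I * t / n) with hedef
  have he_add : ∀ p q : ℤ, e p * e q = e (p + q) := by
    intro p q
    rw [hedef]; dsimp only
    rw [← Complex.exp_add]
    congr 1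
    push_cast
    ring
  have he0 : e (0 : ℤ) = 1 := by
    rw [hedef]; dsimp only
    norm_num
  have he_pow : ∀ (p : ℤ) (m : ℕ), e p ^ m = e (p * m) := by
    intro p m
    rw [hedef]; dsimp only
    rw [← Complex.exp_nat_mul]
    congr 1
    push_cast
    ring
  have he_n : ∀ p : ℤ, e (p * n) = 1 := by
    intro p
    rw [hedef]; dsimp only
    rw [Complex.exp_eq_one_iff]
    refine ⟨p, ?_⟩
    push_cast
    field_simp
  have he_norm : ∀ p : ℤ, ‖e p‖ = 1 := by
    intro p
    rw [hedef]; dsimp only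
    rw [show 2*(Real.pi:ℂ)*I*(p:ℂ)/(n:ℂ) = ((2*Real.pi*p/n : ℝ):ℂ)*I by push_cast; ring]
    exact Complex.norm_exp_ofReal_mul_I _
  have hsum : ∀ t : ℤ, ∑ j ∈ Finset.range n, e ((j:ℤ) * t) = if (n:ℤ) ∣ t then (n:ℂ) else 0 := by
    intro t
    rw [← exp_sum_roots n hn0 t]
    refine Finset.sum_congr rfl fun j _ => ?_
    rw [hedef]; dsimp only
    congr 1
    push_cast
    ring
  have hgeom : ∀ p : ℤ, (∑ m ∈ Finset.range n, (A * e p) ^ m) * (1 - A * e p) = 1 - A ^ n := by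
    intro p
    have h := geom_sum_mul (A * e p) n
    have hx : (A * e p) ^ n = A ^ n := by rw [mul_pow, he_pow, he_n, mul_one]
    linear_combination -h - hx
  have hD : ∀ j : ℕ, A * ((1 - 2 * τ * Real.cos (2 * Real.pi * j / n) : ℝ) : ℂ)
      = T * ((1 - A * e (j:ℤ)) * (1 - A * e (-(j:ℤ)))) := by
    intro j
    have hx : e (j:ℤ) * e (-(j:ℤ)) = 1 := by
      rw [he_add]
      simpa using he0
    have hcos : Complex.cos (2 * (Real.pi:ℂ) * (j:ℂ) / (n:ℂ)) = (e (j:ℤ) + e (-(j:ℤ))) / 2 := by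
      rw [Complex.cos]
      rw [hedef]; dsimp only
      congr 2
      · congr 1
        push_cast
        ring
      · congr 1
        push_cast
        ring
    push_cast
    rw [hcos]
    linear_combination -hqC - T*A^2*hx
  have hDne : ∀ j : ℕ, ((1 - 2 * τ * Real.cos (2 * Real.pi * j / n) : ℝ) : ℂ) ≠ 0 := by
    intro j
    rw [Complex.ofReal_ne_zero]
    have h1 : 0 < 1 - 2 * τ * Real.cos (2 * Real.pi * j / n) := by
      nlinarith [Real.cos_le_one (2 * Real.pi * j / n), Real.neg_one_le_cos (2 * Real.pi * j / n)]
    exact h1.ne'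
  set P : ℕ → ℂ := fun j => ∑ m ∈ Finset.range n, (A * e (j:ℤ)) ^ m with hPdef
  set Q : ℕ → ℂ := fun j => ∑ m ∈ Finset.range n, (A * e (-(j:ℤ))) ^ m with hQdef
  have hterm : ∀ j ∈ Finset.range n,
      Complex.exp (-Complex.I * j * k * (2 * Real.pi / n)) /
          ((1 - 2 * τ * Real.cos (2 * Real.pi * j / n) : ℝ) : ℂ)
        = (e (-((j:ℤ) * k)) * (P j + Q j - (1 - A ^ n))) / (Sc * (1 - A ^ n)) := by
    intro j _
    have hE : Complex.exp (-Complex.I * j * k * (2 * Real.pi / n)) = e (-((j:ℤ) * k)) := by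
      rw [hedef]; dsimp only
      congr 1
      push_cast
      ring
    rw [hE, div_eq_div_iff (hDne j) hScc]
    have g1 : P j * (1 - A * e (j:ℤ)) = 1 - A ^ n := hgeom (j:ℤ)
    have g2 : Q j * (1 - A * e (-(j:ℤ))) = 1 - A ^ n := hgeom (-(j:ℤ))
    have hx : e (j:ℤ) * e (-(j:ℤ)) = 1 := by
      rw [he_add]
      simpa using he0
    have hd := hD j
    apply mul_left_cancel₀ hA0
    linear_combination e (-((j:ℤ) * k)) * (1 - A^n) * hsaC
      + e (-((j:ℤ) * k)) * T * (1 - A^n) * A^2 * hx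
      - e (-((j:ℤ) * k)) * T * (1 - A * e (-(j:ℤ))) * g1
      - e (-((j:ℤ) * k)) * T * (1 - A * e (j:ℤ)) * g2
      - e (-((j:ℤ) * k)) * (P j + Q j - (1 - A^n)) * hd
  have hS1 : ∑ j ∈ Finset.range n, e (-((j:ℤ)*k)) * P j = (n:ℂ) * A ^ k := by
    have h1 : ∀ j ∈ Finset.range n, e (-((j:ℤ)*k)) * P j
        = ∑ m ∈ Finset.range n, A ^ m * e ((j:ℤ)*((m:ℤ)-(k:ℤ))) := by
      intro j _
      rw [hPdef]; dsimp only
      rw [Finset.mul_sum]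
      refine Finset.sum_congr rfl fun m _ => ?_
      rw [mul_pow, he_pow,
        show e (-((j:ℤ)*k)) * (A^m * e ((j:ℤ)*m)) = A^m * (e (-((j:ℤ)*k)) * e ((j:ℤ)*m)) from by ring,
        he_add]
      congr 2
      ring
    rw [Finset.sum_congr rfl h1, Finset.sum_comm]
    have h2 : ∀ m ∈ Finset.range n,
        ∑ j ∈ Finset.range n, A^m * e ((j:ℤ)*((m:ℤ)-k)) = A^m * (if (n:ℤ) ∣ ((m:ℤ)-k) then (n:ℂ) else 0) := by
      intro m _
      rw [← Finset.mul_sum, hsum]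
    rw [Finset.sum_congr rfl h2, Finset.sum_eq_single k]
    · rw [if_pos (by simp), mul_comm]
    · intro m hm hmk
      rw [if_neg, mul_zero]
      intro hdvd
      have hmn : m < n := Finset.mem_range.mp hm
      have habs : |(m:ℤ) - k| < n := by rw [abs_lt]; omega
      have := Int.eq_zero_of_abs_lt_dvd hdvd habs
      omega
    · intro h
      exact absurd (Finset.mem_range.mpr hkn) h
  have hS2 : ∑ j ∈ Finset.range n, e (-((j:ℤ)*k)) * Q j
      = (n:ℂ) * (if k = 0 then 1 else A ^ (n - k)) := by
    have h1 : ∀ j ∈ Finset.range n, e (-((j:ℤ)*k)) * Q j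
        = ∑ m ∈ Finset.range n, A ^ m * e ((j:ℤ)*(-((m:ℤ)+(k:ℤ)))) := by
      intro j _
      rw [hQdef]; dsimp only
      rw [Finset.mul_sum]
      refine Finset.sum_congr rfl fun m _ => ?_
      rw [mul_pow, he_pow,
        show e (-((j:ℤ)*k)) * (A^m * e ((-(j:ℤ))*m)) = A^m * (e (-((j:ℤ)*k)) * e ((-(j:ℤ))*m)) from by ring,
        he_add]
      congr 2
      ring
    rw [Finset.sum_congr rfl h1, Finset.sum_comm]
    have h2 : ∀ m ∈ Finset.range n,
        ∑ j ∈ Finset.range n, A^m * e ((j:ℤ)*(-((m:ℤ)+k))) = A^m * (if (n:ℤ) ∣ (-((m:ℤ)+k)) then (n:ℂ) else 0) := by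
      intro m _
      rw [← Finset.mul_sum, hsum]
    rw [Finset.sum_congr rfl h2, Finset.sum_eq_single (if k = 0 then 0 else n - k)]
    · by_cases hk : k = 0
      · subst hk
        simp
      · rw [if_neg hk, if_neg hk, if_pos, mul_comm]
        rw [Int.dvd_neg]
        refine ⟨1, ?_⟩
        push_cast [Nat.cast_sub hkn.le]
        ring
    · intro m hm hmk
      rw [if_neg, mul_zero]
      rw [Int.dvd_neg]
      rintro ⟨c, hc⟩
      have hmn : m < n := Finset.mem_range.mp hm
      have h2n : (0:ℤ) < n := by exact_mod_cast hn0
      have hb : (0:ℤ) ≤ (n:ℤ) * c := by rw [← hc]; positivity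
      have hb2 : (n:ℤ) * c < (n:ℤ) * 2 := by
        rw [← hc]
        omega
      have hc0 : 0 ≤ c := by nlinarith
      have hc1 : c < 2 := lt_of_mul_lt_mul_left hb2 h2n.le
      interval_cases c
      · simp at hc
        by_cases hk : k = 0 <;> simp [hk] at hmk <;> omega
      · by_cases hk : k = 0 <;> simp [hk] at hmk <;> omega
    · intro h
      exfalso
      apply h
      by_cases hk : k = 0
      · simp [hk, Finset.mem_range, hn0]
      · rw [if_neg hk]
        exact Finset.mem_range.mpr (by omega)
  have hS3 : ∑ j ∈ Finset.range n, e (-((j:ℤ)*k)) = if k = 0 then (n:ℂ) else 0 := by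
    have h1 : ∀ j ∈ Finset.range n, e (-((j:ℤ)*k)) = e ((j:ℤ) * (-(k:ℤ))) := by
      intro j _
      congr 1
      ring
    rw [Finset.sum_congr rfl h1, hsum]
    by_cases hk : k = 0
    · subst hk
      simp
    · rw [if_neg, if_neg hk]
      rw [Int.dvd_neg]
      intro hdvd
      have habs : |(k:ℤ)| < n := by rw [abs_lt]; omega
      have := Int.eq_zero_of_abs_lt_dvd hdvd habs
      omega
  have hSig : ∑ j ∈ Finset.range n,
      Complex.exp (-Complex.I * j * k * (2 * Real.pi / n)) /
        ((1 - 2 * τ * Real.cos (2 * Real.pi * j / n) : ℝ) : ℂ)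
      = ((n:ℂ) * A ^ k + (n:ℂ) * (if k = 0 then 1 else A ^ (n - k))
          - (if k = 0 then (n:ℂ) else 0) * (1 - A ^ n)) / (Sc * (1 - A ^ n)) := by
    rw [Finset.sum_congr rfl hterm, ← Finset.sum_div]
    congr 1
    have hexp : ∀ j ∈ Finset.range n,
        e (-((j:ℤ) * k)) * (P j + Q j - (1 - A ^ n))
          = e (-((j:ℤ)*k)) * P j + e (-((j:ℤ)*k)) * Q j - e (-((j:ℤ)*k)) * (1 - A ^ n) := by
      intro j _
      ring
    rw [Finset.sum_congr rfl hexp]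
    rw [Finset.sum_sub_distrib, Finset.sum_add_distrib, hS1, hS2, ← Finset.sum_mul, hS3]
  rw [hSig, hFdef]
  by_cases hk : k = 0
  · simp only [hk, if_pos]
    push_cast
    field_simp
    ring
  · simp only [if_neg hk]
    push_cast
    field_simp
    ring
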